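/- Let 0 < α < 1, let x : [t₀,T] → (0,∞) be continuously differentiable, and fix x* > 0. Define V(t) = x(t) − x* − x* ln(x(t)/x*). Then for every t ∈ (t₀,T], the Caputo derivative of V of order α based at t₀ satisfies ᶜD^α V(t) ≤ (1 − x*/x(t)) · ᶜD^α x(t). -/

import Mathlib

/-- The Caputo fractional derivative of order `α` (0 < α < 1) based at `t₀`:
`ᶜD^α φ(t) = (1/Γ(1−α)) ∫_{t₀}^{t} φ′(x)(t−x)^{−α} dx`. -/
noncomputable def caputo (α t₀ : ℝ) (φ : ℝ → ℝ) (t : ℝ) : ℝ :=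
  (1 / Real.Gamma (1 - α)) * ∫ x in t₀..t, deriv φ x * (t - x) ^ (-α)

/- STATEMENT 5: Let 0 < α < 1, let x : [t₀,T] → (0,∞) be continuously differentiable,
and fix x* > 0. Define V(t) = x(t) − x* − x* ln(x(t)/x*). Then for every t ∈ (t₀,T],
ᶜD^α V(t) ≤ (1 − x*/x(t)) · ᶜD^α x(t). -/
theorem stmt_5 (α t₀ T xstar : ℝ) (hα0 : 0 < α) (hα1 : α < 1) (hT : t₀ < T)
    (hxstar : 0 < xstar)
    (x : ℝ → ℝ)
    (hx : ContDiffOn ℝ 1 x (Set.Icc t₀ T))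
    (hxpos : ∀ y ∈ Set.Icc t₀ T, 0 < x y) :
    ∀ t ∈ Set.Ioc t₀ T,
      caputo α t₀ (fun τ => x τ - xstar - xstar * Real.log (x τ / xstar)) t
        ≤ (1 - xstar / x t) * caputo α t₀ x t := by
  have huniq : UniqueDiffOn ℝ (Set.Icc t₀ T) := uniqueDiffOn_Icc hT
  have hxcont : ContinuousOn x (Set.Icc t₀ T) := hx.continuousOn
  have hxne : ∀ y ∈ Set.Icc t₀ T, x y ≠ 0 := fun y hy => (hxpos y hy).ne'
  set Dx : ℝ → ℝ := derivWithin x (Set.Icc t₀ T) with hDx_def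
  have hDxcont : ContinuousOn Dx (Set.Icc t₀ T) := hx.continuousOn_derivWithin huniq le_rfl
  have hhx : ∀ τ ∈ Set.Ioo t₀ T, HasDerivAt x (Dx τ) τ := by
    intro τ hτ
    exact ((hx.differentiableOn one_ne_zero τ (Set.Ioo_subset_Icc_self hτ)).hasDerivWithinAt).hasDerivAt
      (Icc_mem_nhds hτ.1 hτ.2)
  intro t ht
  obtain ⟨ht0, htT⟩ := ht
  have hxt : 0 < x t := hxpos t ⟨ht0.le, htT⟩
  set c : ℝ := 1 - xstar / x t with hc_def
  set G : ℝ → ℝ := fun τ => (xstar / x t - xstar / x τ) * Dx τ with hG_def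
  set g : ℝ → ℝ := fun τ => xstar * (x τ / x t) - xstar - xstar * Real.log (x τ / x t) with hg_def
  have hsub : Set.Icc t₀ t ⊆ Set.Icc t₀ T := Set.Icc_subset_Icc le_rfl htT
  have huIcc : Set.uIcc t₀ t = Set.Icc t₀ t := Set.uIcc_of_le ht0.le
  have hGcont : ContinuousOn G (Set.Icc t₀ T) :=
    (continuousOn_const.sub (continuousOn_const.div hxcont hxne)).mul hDxcont
  have hgcont : ContinuousOn g (Set.Icc t₀ T) := by
    apply ((continuousOn_const.mul (hxcont.div_const _)).sub continuousOn_const).sub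
    exact continuousOn_const.mul ((hxcont.div_const _).log (fun y hy => by
      have := hxpos y hy; positivity))
  have hg_nonneg : ∀ τ ∈ Set.Icc t₀ T, 0 ≤ g τ := by
    intro τ hτ
    have h1 : 0 < x τ := hxpos τ hτ
    have h2 : 0 < x τ / x t := by positivity
    have h3 := Real.log_le_sub_one_of_pos h2
    simp only [hg_def]
    nlinarith [hxstar.le]
  have hgt : g t = 0 := by
    simp [hg_def, div_self hxt.ne']
  have hhg : ∀ τ ∈ Set.Ioo t₀ T, HasDerivAt g (G τ) τ := by
    intro τ hτ
    have h1 := hhx τ hτ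
    have hxτ : 0 < x τ := hxpos τ (Set.Ioo_subset_Icc_self hτ)
    have hlog : HasDerivAt (fun y => Real.log (x y / x t)) (Dx τ / x τ) τ := by
      have h2 := (h1.div_const (x t)).log (by positivity)
      convert h2 using 1
      field_simp
    have h3 := (((h1.div_const (x t)).const_mul xstar).sub_const xstar).sub (hlog.const_mul xstar)
    refine h3.congr_deriv ?_
    simp only [hG_def]
    field_simp
  have hhV : ∀ τ ∈ Set.Ioo t₀ T,
      HasDerivAt (fun y => x y - xstar - xstar * Real.log (x y / xstar))
        ((1 - xstar / x τ) * Dx τ) τ := by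
    intro τ hτ
    have h1 := hhx τ hτ
    have hxτ : 0 < x τ := hxpos τ (Set.Ioo_subset_Icc_self hτ)
    have hlog : HasDerivAt (fun y => Real.log (x y / xstar)) (Dx τ / x τ) τ := by
      have h2 := (h1.div_const xstar).log (by positivity)
      convert h2 using 1
      field_simp
    have h3 := (h1.sub_const xstar).sub (hlog.const_mul xstar)
    refine h3.congr_deriv ?_
    field_simp
  have hk_int : ∀ a b : ℝ, IntervalIntegrable (fun τ => (t - τ) ^ (-α)) MeasureTheory.volume a b := by
    intro a b
    have h1 := (intervalIntegral.intervalIntegrable_rpow' (a := t - a) (b := t - b) (r := -α)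
      (by linarith)).comp_sub_left t
    simpa using h1
  have hIG : IntervalIntegrable (fun τ => G τ * (t - τ) ^ (-α)) MeasureTheory.volume t₀ t :=
    (hk_int t₀ t).continuousOn_mul (hGcont.mono (by rw [huIcc]; exact hsub))
  obtain ⟨M, hM⟩ := IsCompact.exists_bound_of_continuousOn isCompact_Icc hGcont
  have hM0 : 0 ≤ M := le_trans (norm_nonneg _) (hM t₀ ⟨le_rfl, hT.le⟩)
  set J : ℝ := ∫ τ in t₀..t, G τ * (t - τ) ^ (-α) with hJ_def
  have key : ∀ s ∈ Set.Ioo t₀ t, J ≤ (M + M / (1 - α)) * (t - s) ^ (1 - α) := by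
    intro s hs
    have hts : 0 < t - s := by linarith [hs.2]
    have hsT : s ∈ Set.Icc t₀ T := ⟨hs.1.le, le_trans hs.2.le htT⟩
    have hsubst : Set.Icc s t ⊆ Set.Icc t₀ T := Set.Icc_subset_Icc hs.1.le htT
    have hsubs0 : Set.Icc t₀ s ⊆ Set.Icc t₀ T := Set.Icc_subset_Icc le_rfl hsT.2
    have huIccst : Set.uIcc s t = Set.Icc s t := Set.uIcc_of_le hs.2.le
    have huIccs0 : Set.uIcc t₀ s = Set.Icc t₀ s := Set.uIcc_of_le hs.1.le
    have hIG1 : IntervalIntegrable (fun τ => G τ * (t - τ) ^ (-α)) MeasureTheory.volume t₀ s :=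
      (hk_int t₀ s).continuousOn_mul (hGcont.mono (by rw [huIccs0]; exact hsubs0))
    have hIG2 : IntervalIntegrable (fun τ => G τ * (t - τ) ^ (-α)) MeasureTheory.volume s t :=
      (hk_int s t).continuousOn_mul (hGcont.mono (by rw [huIccst]; exact hsubst))
    have hkval : (∫ τ in s..t, (t - τ) ^ (-α)) = (t - s) ^ (1 - α) / (1 - α) := by
      have h1 : (∫ τ in s..t, (t - τ) ^ (-α)) = ∫ u in (t - t)..(t - s), u ^ (-α) :=
        intervalIntegral.integral_comp_sub_left (fun u => u ^ (-α)) t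
      rw [h1, sub_self, integral_rpow (Or.inl (by linarith)),
        Real.zero_rpow (by linarith : -α + 1 ≠ 0),
        show -α + 1 = 1 - α from by ring]
      ring
    have hpart2 : (∫ τ in s..t, G τ * (t - τ) ^ (-α)) ≤ M * ((t - s) ^ (1 - α) / (1 - α)) := by
      have hmono : (∫ τ in s..t, G τ * (t - τ) ^ (-α)) ≤ ∫ τ in s..t, M * (t - τ) ^ (-α) := by
        apply intervalIntegral.integral_mono_on hs.2.le hIG2 ((hk_int s t).const_mul M)
        intro τ hτ
        have hknn : (0:ℝ) ≤ (t - τ) ^ (-α) := Real.rpow_nonneg (by linarith [hτ.2]) _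
        have habs : G τ ≤ M := le_trans (le_abs_self _) (by simpa using hM τ (hsubst hτ))
        exact mul_le_mul_of_nonneg_right habs hknn
      rwa [intervalIntegral.integral_const_mul, hkval] at hmono
    have hGint_st : IntervalIntegrable G MeasureTheory.volume s t := by
      apply ContinuousOn.intervalIntegrable
      rw [huIccst]; exact hGcont.mono hsubst
    have hgs : g s ≤ M * (t - s) := by
      have hftc : (∫ τ in s..t, G τ) = g t - g s := by
        apply intervalIntegral.integral_eq_sub_of_hasDerivAt_of_le hs.2.le
          (hgcont.mono hsubst) ?_ hGint_st
        intro τ hτ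
        exact hhg τ ⟨lt_trans hs.1 hτ.1, lt_of_lt_of_le hτ.2 htT⟩
      have hb := intervalIntegral.norm_integral_le_of_norm_le_const (C := M)
        (f := G) (a := s) (b := t) (fun τ hτ => by
          rw [Set.uIoc_of_le hs.2.le] at hτ
          exact hM τ (hsubst (Set.Ioc_subset_Icc_self hτ)))
      rw [hftc, hgt] at hb
      calc g s ≤ |g s| := le_abs_self _
        _ = ‖(0:ℝ) - g s‖ := by rw [Real.norm_eq_abs, zero_sub, abs_neg]
        _ ≤ M * |t - s| := hb
        _ = M * (t - s) := by rw [abs_of_pos hts]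
    have hkcont0 : ContinuousOn (fun τ => (t - τ) ^ (-α)) (Set.Icc t₀ s) := by
      apply ContinuousOn.rpow_const (continuousOn_const.sub continuousOn_id)
      intro τ hτ
      exact Or.inl (sub_ne_zero.mpr (lt_of_le_of_lt hτ.2 hs.2).ne')
    have hk2cont : ContinuousOn (fun τ => α * (t - τ) ^ (-α - 1)) (Set.Icc t₀ s) := by
      apply ContinuousOn.mul continuousOn_const
      apply ContinuousOn.rpow_const (continuousOn_const.sub continuousOn_id)
      intro τ hτ
      exact Or.inl (sub_ne_zero.mpr (lt_of_le_of_lt hτ.2 hs.2).ne')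
    have hint2 : IntervalIntegrable (fun τ => g τ * (α * (t - τ) ^ (-α - 1)))
        MeasureTheory.volume t₀ s := by
      apply ContinuousOn.intervalIntegrable
      rw [huIccs0]
      exact (hgcont.mono hsubs0).mul hk2cont
    have hFTC : (∫ τ in t₀..s, (G τ * (t - τ) ^ (-α) + g τ * (α * (t - τ) ^ (-α - 1))))
        = g s * (t - s) ^ (-α) - g t₀ * (t - t₀) ^ (-α) := by
      apply intervalIntegral.integral_eq_sub_of_hasDerivAt_of_le hs.1.le
      · exact (hgcont.mono hsubs0).mul hkcont0
      · intro τ hτ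
        have hτT : τ ∈ Set.Ioo t₀ T := ⟨hτ.1, lt_of_lt_of_le (lt_trans hτ.2 hs.2) htT⟩
        have hkd : HasDerivAt (fun y => (t - y) ^ (-α)) (α * (t - τ) ^ (-α - 1)) τ := by
          have h1 : HasDerivAt (fun y : ℝ => t - y) (-1) τ := (hasDerivAt_id τ).const_sub t
          have hne : (t - τ) ≠ 0 := sub_ne_zero.mpr (lt_trans hτ.2 hs.2).ne'
          have h2 := (Real.hasDerivAt_rpow_const (p := -α) (Or.inl hne)).comp τ h1
          have h3 : α * (t - τ) ^ (-α - 1) = -α * (t - τ) ^ (-α - 1) * (-1) := by ring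
          rw [h3]
          exact h2
        exact (hhg τ hτT).mul hkd
      · apply ContinuousOn.intervalIntegrable
        rw [huIccs0]
        exact ((hGcont.mono hsubs0).mul hkcont0).add ((hgcont.mono hsubs0).mul hk2cont)
    have hsplit : (∫ τ in t₀..s, G τ * (t - τ) ^ (-α))
        = g s * (t - s) ^ (-α) - g t₀ * (t - t₀) ^ (-α)
          - ∫ τ in t₀..s, g τ * (α * (t - τ) ^ (-α - 1)) := by
      have h4 : (∫ τ in t₀..s, G τ * (t - τ) ^ (-α))
          + (∫ τ in t₀..s, g τ * (α * (t - τ) ^ (-α - 1)))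
          = g s * (t - s) ^ (-α) - g t₀ * (t - t₀) ^ (-α) := by
        rw [← intervalIntegral.integral_add hIG1 hint2]
        exact hFTC
      linarith
    have hpart1 : (∫ τ in t₀..s, G τ * (t - τ) ^ (-α)) ≤ M * (t - s) ^ (1 - α) := by
      have hI2nn : 0 ≤ ∫ τ in t₀..s, g τ * (α * (t - τ) ^ (-α - 1)) := by
        apply intervalIntegral.integral_nonneg hs.1.le
        intro τ hτ
        have h1 : 0 ≤ g τ := hg_nonneg τ (hsubs0 hτ)
        have h2 : (0:ℝ) ≤ (t - τ) ^ (-α - 1) :=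
          Real.rpow_nonneg (by linarith [hτ.2, hs.2]) _
        exact mul_nonneg h1 (mul_nonneg hα0.le h2)
      have hb0 : 0 ≤ g t₀ * (t - t₀) ^ (-α) :=
        mul_nonneg (hg_nonneg t₀ ⟨le_rfl, hT.le⟩) (Real.rpow_nonneg (by linarith) _)
      have hks : (0:ℝ) ≤ (t - s) ^ (-α) := Real.rpow_nonneg hts.le _
      have hgsk : g s * (t - s) ^ (-α) ≤ M * (t - s) ^ (1 - α) := by
        have h1 : g s * (t - s) ^ (-α) ≤ (M * (t - s)) * (t - s) ^ (-α) :=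
          mul_le_mul_of_nonneg_right hgs hks
        have h2 : (M * (t - s)) * (t - s) ^ (-α) = M * (t - s) ^ (1 - α) := by
          rw [show (1 : ℝ) - α = 1 + (-α) from by ring, Real.rpow_add hts, Real.rpow_one]
          ring
        linarith
      linarith
    calc J = (∫ τ in t₀..s, G τ * (t - τ) ^ (-α)) + ∫ τ in s..t, G τ * (t - τ) ^ (-α) :=
        (intervalIntegral.integral_add_adjacent_intervals hIG1 hIG2).symm
      _ ≤ M * (t - s) ^ (1 - α) + M * ((t - s) ^ (1 - α) / (1 - α)) := add_le_add hpart1 hpart2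
      _ = (M + M / (1 - α)) * (t - s) ^ (1 - α) := by ring
  have hJ0 : J ≤ 0 := by
    have h1 : Filter.Tendsto (fun s : ℝ => t - s) (nhdsWithin t (Set.Iio t)) (nhds 0) := by
      have h : Filter.Tendsto (fun s : ℝ => t - s) (nhds t) (nhds (t - t)) :=
        (continuous_const.sub continuous_id).tendsto t
      rw [sub_self] at h
      exact h.mono_left nhdsWithin_le_nhds
    have h2 : Filter.Tendsto (fun u : ℝ => u ^ (1 - α)) (nhds (0:ℝ)) (nhds 0) := by
      have h := (Real.continuousAt_rpow_const 0 (1 - α) (Or.inr (by linarith))).tendsto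
      rwa [Real.zero_rpow (by linarith : (1:ℝ) - α ≠ 0)] at h
    have h3 := (h2.comp h1).const_mul (M + M / (1 - α))
    rw [mul_zero] at h3
    apply ge_of_tendsto h3
    filter_upwards [Ioo_mem_nhdsLT_of_mem (⟨ht0, le_rfl⟩ : t ∈ Set.Ioc t₀ t)] with s hs
    exact key s hs
  have hΓ : 0 < Real.Gamma (1 - α) := Real.Gamma_pos_of_pos (by linarith)
  have hI1 : IntervalIntegrable (fun τ => ((1 - xstar / x τ) * Dx τ) * (t - τ) ^ (-α))
      MeasureTheory.volume t₀ t :=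
    (hk_int t₀ t).continuousOn_mul
      (((continuousOn_const.sub (continuousOn_const.div hxcont hxne)).mul hDxcont).mono
        (by rw [huIcc]; exact hsub))
  have hI2 : IntervalIntegrable (fun τ => Dx τ * (t - τ) ^ (-α)) MeasureTheory.volume t₀ t :=
    (hk_int t₀ t).continuousOn_mul (hDxcont.mono (by rw [huIcc]; exact hsub))
  have hae : ∀ᵐ τ : ℝ ∂MeasureTheory.volume, τ ≠ t := by
    rw [MeasureTheory.ae_iff]
    have h : {τ : ℝ | ¬ τ ≠ t} = {t} := by ext y; simp
    rw [h]
    exact Real.volume_singleton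
  have hmemIoo : ∀ τ ∈ Set.uIoc t₀ t, τ ≠ t → τ ∈ Set.Ioo t₀ T := by
    intro τ hτ hne
    rw [Set.uIoc_of_le ht0.le] at hτ
    exact ⟨hτ.1, lt_of_lt_of_le (lt_of_le_of_ne hτ.2 hne) htT⟩
  have hVint : (∫ τ in t₀..t, deriv (fun y => x y - xstar - xstar * Real.log (x y / xstar)) τ
        * (t - τ) ^ (-α))
      = ∫ τ in t₀..t, ((1 - xstar / x τ) * Dx τ) * (t - τ) ^ (-α) := by
    apply intervalIntegral.integral_congr_ae
    filter_upwards [hae] with τ hne hmem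
    rw [(hhV τ (hmemIoo τ hmem hne)).deriv]
  have hxint : (∫ τ in t₀..t, deriv x τ * (t - τ) ^ (-α))
      = ∫ τ in t₀..t, Dx τ * (t - τ) ^ (-α) := by
    apply intervalIntegral.integral_congr_ae
    filter_upwards [hae] with τ hne hmem
    rw [(hhx τ (hmemIoo τ hmem hne)).deriv]
  have hdiff : (∫ τ in t₀..t, ((1 - xstar / x τ) * Dx τ) * (t - τ) ^ (-α))
      - c * ∫ τ in t₀..t, Dx τ * (t - τ) ^ (-α) = J := by
    rw [← intervalIntegral.integral_const_mul, ← intervalIntegral.integral_sub hI1 (hI2.const_mul c)]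
    apply intervalIntegral.integral_congr
    intro τ hτ
    simp only [hG_def, hc_def]
    ring
  show caputo α t₀ (fun τ => x τ - xstar - xstar * Real.log (x τ / xstar)) t ≤ c * caputo α t₀ x t
  unfold caputo
  rw [hVint, hxint]
  rw [show c * (1 / Real.Gamma (1 - α) * ∫ τ in t₀..t, Dx τ * (t - τ) ^ (-α))
      = (1 / Real.Gamma (1 - α)) * (c * ∫ τ in t₀..t, Dx τ * (t - τ) ^ (-α)) from by ring]
  apply mul_le_mul_of_nonneg_left _ (by positivity)
  linarith
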